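/- For every degree-zero chip configuration x on V in a trinity, there exists a degree-zero chip configuration y on E such that (x, 0, 0) ≈_W (0, −y, 0), i.e., (x, y, 0) is an integer linear combination of characteristic vectors of white triangles. -/

import Mathlib

open Finset

/-- A combinatorial trinity: a triangulation of the sphere `S²` whose `0`-simplices are
properly three-colored by `V` (violet), `E` (emerald) and `R` (red).  It is encoded by
its sets `Tw` of white and `Tb` of black triangles, the color of each corner of each
triangle, and the three edge-gluing bijections `σR`, `σE`, `σV` matching each white
triangle with the black triangle sharing its red (resp. emerald, violet) edge.  The
link conditions state that the triangles around each vertex form a single cycle, and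
connectivity of the surface is required; the sphere (Euler) condition
`|V| + |E| + |R| = |Tw| + 2` appears as a hypothesis of the theorems. -/
structure Trinity (V E R Tw Tb : Type) where
  vw : Tw → V
  ew : Tw → E
  rW : Tw → R
  vb : Tb → V
  eb : Tb → E
  rb : Tb → R
  σR : Tw ≃ Tb
  σE : Tw ≃ Tb
  σV : Tw ≃ Tb
  σR_v : ∀ t, vb (σR t) = vw t
  σR_e : ∀ t, eb (σR t) = ew t
  σE_v : ∀ t, vb (σE t) = vw t
  σE_r : ∀ t, rb (σE t) = rW t
  σV_e : ∀ t, eb (σV t) = ew t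
  σV_r : ∀ t, rb (σV t) = rW t
  vsurj : Function.Surjective vw
  esurj : Function.Surjective ew
  rsurj : Function.Surjective rW
  linkV : ∀ t t' : Tw, vw t = vw t' →
    Relation.ReflTransGen (fun a b => σR a = σE b) t t'
  linkE : ∀ t t' : Tw, ew t = ew t' →
    Relation.ReflTransGen (fun a b => σR a = σV b) t t'
  linkR : ∀ t t' : Tw, rW t = rW t' →
    Relation.ReflTransGen (fun a b => σE a = σV b) t t'
  conn : ∀ t t' : Tw, Relation.ReflTransGen (fun a b =>
    σR a = σE b ∨ σR a = σV b ∨ σE a = σR b ∨ σE a = σV b ∨ σV a = σR b ∨ σV a = σE b) t t'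

namespace Trinity

variable {V E R Tw Tb : Type}

/-- The characteristic vector (in `ℤ^{V∪E∪R}`) of a white triangle. -/
def chi [DecidableEq V] [DecidableEq E] [DecidableEq R]
    (S : Trinity V E R Tw Tb) (t : Tw) : (V → ℤ) × (E → ℤ) × (R → ℤ) :=
  (fun v => if S.vw t = v then 1 else 0,
   fun e => if S.ew t = e then 1 else 0,
   fun r => if S.rW t = r then 1 else 0)

/-- The Laplacian of the balanced plane digraph `D_V` applied to `z : V → ℤ`: for each
white triangle `t`, the corresponding edge of `D_V` points from the violet vertex of
the black triangle `σV t` to the violet vertex of `t` (they share their violet edge),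
and firing moves one chip along each such edge. -/
def lapV [Fintype Tw] [DecidableEq V] (S : Trinity V E R Tw Tb) (z : V → ℤ) : V → ℤ :=
  fun u => ∑ t : Tw, z (S.vb (S.σV t)) *
    ((if S.vw t = u then 1 else 0) - (if S.vb (S.σV t) = u then 1 else 0))

/-- Linear equivalence of chip configurations on `D_V`. -/
def linEqV [Fintype Tw] [DecidableEq V] (S : Trinity V E R Tw Tb) (x y : V → ℤ) : Prop :=
  ∃ z : V → ℤ, y = x + S.lapV z

/-- The Laplacian of the balanced plane digraph `D_E` applied to `z : E → ℤ`. -/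
def lapE [Fintype Tw] [DecidableEq E] (S : Trinity V E R Tw Tb) (z : E → ℤ) : E → ℤ :=
  fun u => ∑ t : Tw, z (S.eb (S.σE t)) *
    ((if S.ew t = u then 1 else 0) - (if S.eb (S.σE t) = u then 1 else 0))

/-- Linear equivalence of chip configurations on `D_E`. -/
def linEqE [Fintype Tw] [DecidableEq E] (S : Trinity V E R Tw Tb) (x y : E → ℤ) : Prop :=
  ∃ z : E → ℤ, y = x + S.lapE z

/-- The red graph `G_R`: the bipartite graph on `V ∪ E` formed by the red edges (the
support simple graph; each red edge lies in a unique white triangle). -/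
def SR (S : Trinity V E R Tw Tb) : SimpleGraph (V ⊕ E) where
  Adj a b := ∃ t : Tw, (a = Sum.inl (S.vw t) ∧ b = Sum.inr (S.ew t)) ∨
    (b = Sum.inl (S.vw t) ∧ a = Sum.inr (S.ew t))
  symm := by
    constructor
    rintro a b ⟨t, h | h⟩
    exacts [⟨t, Or.inr h⟩, ⟨t, Or.inl h⟩]
  loopless := by
    constructor
    rintro a ⟨t, ⟨h1, h2⟩ | ⟨h1, h2⟩⟩ <;> subst h1 <;> simp at h2

/-- The violet graph `G_V`: the bipartite graph on `R ∪ E` formed by the violet edges. -/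
def SV (S : Trinity V E R Tw Tb) : SimpleGraph (R ⊕ E) where
  Adj a b := ∃ t : Tw, (a = Sum.inl (S.rW t) ∧ b = Sum.inr (S.ew t)) ∨
    (b = Sum.inl (S.rW t) ∧ a = Sum.inr (S.ew t))
  symm := by
    constructor
    rintro a b ⟨t, h | h⟩
    exacts [⟨t, Or.inr h⟩, ⟨t, Or.inl h⟩]
  loopless := by
    constructor
    rintro a ⟨t, ⟨h1, h2⟩ | ⟨h1, h2⟩⟩ <;> subst h1 <;> simp at h2

/-- `f : E → ℤ` is a hypertree of the red graph `G_R` on `E`. -/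
def hypertreeRE (S : Trinity V E R Tw Tb) (f : E → ℤ) : Prop :=
  ∃ T : SimpleGraph (V ⊕ E), T ≤ S.SR ∧ T.IsTree ∧
    ∀ e : E, ((T.neighborSet (Sum.inr e)).ncard : ℤ) = f e + 1

/-- `f : E → ℤ` is a hypertree of the violet graph `G_V` on `E`. -/
def hypertreeVE (S : Trinity V E R Tw Tb) (f : E → ℤ) : Prop :=
  ∃ T : SimpleGraph (R ⊕ E), T ≤ S.SV ∧ T.IsTree ∧
    ∀ e : E, ((T.neighborSet (Sum.inr e)).ncard : ℤ) = f e + 1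

/-- `f : V → ℤ` is a hypertree of the red graph `G_R` on `V`. -/
def hypertreeRV (S : Trinity V E R Tw Tb) (f : V → ℤ) : Prop :=
  ∃ T : SimpleGraph (V ⊕ E), T ≤ S.SR ∧ T.IsTree ∧
    ∀ v : V, ((T.neighborSet (Sum.inl v)).ncard : ℤ) = f v + 1

/-- The common degree `d(e) = d_{G_R}(e) = d_{G_V}(e)` of an emerald vertex, i.e. the
number of white triangles at `e`. -/
noncomputable def dE (S : Trinity V E R Tw Tb) (e : E) : ℤ := (({t : Tw | S.ew t = e}).ncard : ℤ)

end Trinity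

/-- for every degree-zero chip configuration `x` on `V` there is a
degree-zero chip configuration `y` on `E` with `(x, 0, 0) ≈_W (0, −y, 0)`, i.e.
`(x, y, 0)` is an integer linear combination of characteristic vectors of white
triangles. -/
theorem exists_emerald_partner
    {V E R Tw Tb : Type} [Fintype V] [Fintype E] [Fintype R] [Fintype Tw]
    [DecidableEq V] [DecidableEq E] [DecidableEq R]
    (S : Trinity V E R Tw Tb)
    (heuler : Fintype.card V + Fintype.card E + Fintype.card R = Fintype.card Tw + 2)
    (x : V → ℤ) (hx : ∑ v, x v = 0) :
    ∃ y : E → ℤ, ∑ e, y e = 0 ∧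
      ∃ c : Tw → ℤ,
        ((x, y, 0) : (V → ℤ) × (E → ℤ) × (R → ℤ)) = ∑ t : Tw, c t • S.chi t := by
  classical
  -- The relation on white triangles: sharing a violet or a red vertex.
  set Rel : Tw → Tw → Prop := fun a b => S.vw a = S.vw b ∨ S.rW a = S.rW b with hRel
  have hsymm : Symmetric Rel := by
    intro a b h; rcases h with h | h
    · exact Or.inl h.symm
    · exact Or.inr h.symm
  -- Handling the mixed step σR a = σV b via an auxiliary white triangle.
  have step2 : ∀ a b : Tw, S.σR a = S.σV b → Relation.ReflTransGen Rel a b := by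
    intro a b hab
    set b' := S.σE.symm (S.σR a) with hb'
    have hEb' : S.σE b' = S.σR a := by rw [hb', Equiv.apply_symm_apply]
    have h1 : S.vw b' = S.vw a := by
      have h := S.σE_v b'
      rw [hEb', S.σR_v a] at h
      exact h.symm
    have h2 : S.rW b' = S.rW b := by
      have h := S.σE_r b'
      rw [hEb', hab, S.σV_r b] at h
      exact h.symm
    exact Relation.ReflTransGen.head (Or.inl h1.symm)
      (Relation.ReflTransGen.single (Or.inr h2))
  -- Any two white triangles are connected by Rel.
  have hconn : ∀ t t' : Tw, Relation.ReflTransGen Rel t t' := by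
    have key : ∀ a b : Tw, (S.σR a = S.σE b ∨ S.σR a = S.σV b ∨ S.σE a = S.σR b ∨
        S.σE a = S.σV b ∨ S.σV a = S.σR b ∨ S.σV a = S.σE b) →
        Relation.ReflTransGen Rel a b := by
      intro a b h
      rcases h with h | h | h | h | h | h
      · refine Relation.ReflTransGen.single (Or.inl ?_)
        have h1 := S.σR_v a; have h2 := S.σE_v b
        rw [← h1, h, h2]
      · exact step2 a b h
      · refine Relation.ReflTransGen.single (Or.inl ?_)
        have h1 := S.σE_v a; have h2 := S.σR_v b
        rw [← h1, h, h2]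
      · refine Relation.ReflTransGen.single (Or.inr ?_)
        have h1 := S.σE_r a; have h2 := S.σV_r b
        rw [← h1, h, h2]
      · haveI : Std.Symm Rel := ⟨hsymm⟩; exact Std.Symm.symm (r := Relation.ReflTransGen Rel) _ _ (step2 b a h.symm)
      · refine Relation.ReflTransGen.single (Or.inr ?_)
        have h1 := S.σV_r a; have h2 := S.σE_r b
        rw [← h1, h, h2]
    intro t t'
    have h := S.conn t t'
    induction h with
    | refl => exact Relation.ReflTransGen.refl
    | tail _ hbc ih => exact ih.trans (key _ _ hbc)
  -- Indicator-sum helper.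
  have sum_ind : ∀ (b : Tw) (p : Tw → Prop) [DecidablePred p],
      ∑ s : Tw, (if p s then (if s = b then (1:ℤ) else 0) else 0)
        = if p b then 1 else 0 := by
    intro b p _
    have h : ∀ s : Tw, (if p s then (if s = b then (1:ℤ) else 0) else 0)
        = if s = b then (if p b then (1:ℤ) else 0) else 0 := by
      intro s
      by_cases hs : s = b
      · subst hs; simp
      · simp [hs]
    rw [Finset.sum_congr rfl fun s _ => h s]
    simp
  -- Along a Rel-path, we can realize the difference of violet indicators.
  have hpath : ∀ t t' : Tw, Relation.ReflTransGen Rel t t' →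
      ∃ c : Tw → ℤ,
        (∀ v, ∑ s : Tw, (if S.vw s = v then c s else 0)
            = (if S.vw t = v then 1 else 0) - (if S.vw t' = v then 1 else 0)) ∧
        (∀ r, ∑ s : Tw, (if S.rW s = r then c s else 0) = 0) := by
    intro t t' h
    induction h with
    | refl => exact ⟨0, by simp, by simp⟩
    | @tail b u hb hrel ih =>
      obtain ⟨c, hcv, hcr⟩ := ih
      rcases hrel with h | h
      · exact ⟨c, by intro v; rw [hcv, h], hcr⟩
      · refine ⟨fun s => c s + ((if s = b then 1 else 0) - (if s = u then 1 else 0)),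
          ?_, ?_⟩
        · intro v
          have hsplit : ∀ s : Tw, (if S.vw s = v then
                (c s + ((if s = b then (1:ℤ) else 0) - (if s = u then 1 else 0))) else 0)
              = (if S.vw s = v then c s else 0)
                + ((if S.vw s = v then (if s = b then (1:ℤ) else 0) else 0)
                  - (if S.vw s = v then (if s = u then (1:ℤ) else 0) else 0)) := by
            intro s; split <;> ring
          rw [Finset.sum_congr rfl fun s _ => hsplit s, Finset.sum_add_distrib,
            Finset.sum_sub_distrib, hcv, sum_ind b (fun s => S.vw s = v),
            sum_ind u (fun s => S.vw s = v)]
          ring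
        · intro r
          have hsplit : ∀ s : Tw, (if S.rW s = r then
                (c s + ((if s = b then (1:ℤ) else 0) - (if s = u then 1 else 0))) else 0)
              = (if S.rW s = r then c s else 0)
                + ((if S.rW s = r then (if s = b then (1:ℤ) else 0) else 0)
                  - (if S.rW s = r then (if s = u then (1:ℤ) else 0) else 0)) := by
            intro s; split <;> ring
          rw [Finset.sum_congr rfl fun s _ => hsplit s, Finset.sum_add_distrib,
            Finset.sum_sub_distrib, hcr, sum_ind b (fun s => S.rW s = r),
            sum_ind u (fun s => S.rW s = r), h]
          ring
  cases isEmpty_or_nonempty V with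
  | inl hV =>
    refine ⟨0, by simp, 0, ?_⟩
    have hx0 : x = 0 := funext fun v => (hV.false v).elim
    simp [hx0]
  | inr hV =>
    obtain ⟨v₀⟩ := hV
    set t₀ : Tw := (S.vsurj v₀).choose with ht₀
    -- For each v, pick a triangle at v and a coefficient vector moving a chip from v to vw t₀.
    have hall : ∀ v : V, ∃ c : Tw → ℤ,
        (∀ u, ∑ s : Tw, (if S.vw s = u then c s else 0)
            = (if v = u then 1 else 0) - (if S.vw t₀ = u then 1 else 0)) ∧
        (∀ r, ∑ s : Tw, (if S.rW s = r then c s else 0) = 0) := by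
      intro v
      obtain ⟨c, hcv, hcr⟩ := hpath (S.vsurj v).choose t₀ (hconn _ _)
      refine ⟨c, ?_, hcr⟩
      intro u
      rw [hcv u, (S.vsurj v).choose_spec]
    choose cf hcv hcr using hall
    set c : Tw → ℤ := fun s => ∑ v, x v * cf v s with hc
    -- The violet component of the resulting configuration is x.
    have hvc : ∀ v : V, ∑ s : Tw, (if S.vw s = v then c s else 0) = x v := by
      intro v
      have h1 : ∀ s : Tw, (if S.vw s = v then c s else 0)
          = ∑ u : V, x u * (if S.vw s = v then cf u s else 0) := by
        intro s
        by_cases hs : S.vw s = v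
        · simp only [hs, if_true, hc, Finset.mul_sum]
        · simp [hs]
      rw [Finset.sum_congr rfl fun s _ => h1 s, Finset.sum_comm]
      have h2 : ∀ u : V, ∑ s : Tw, x u * (if S.vw s = v then cf u s else 0)
          = x u * ((if u = v then 1 else 0) - (if S.vw t₀ = v then 1 else 0)) := by
        intro u
        rw [← Finset.mul_sum, hcv u v]
      rw [Finset.sum_congr rfl fun u _ => h2 u]
      have h3 : ∀ u : V, x u * ((if u = v then (1:ℤ) else 0)
            - (if S.vw t₀ = v then 1 else 0))
          = (if u = v then x u else 0) - x u * (if S.vw t₀ = v then 1 else 0) := by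
        intro u; split_ifs <;> ring
      rw [Finset.sum_congr rfl fun u _ => h3 u, Finset.sum_sub_distrib,
        ← Finset.sum_mul, hx, Finset.sum_ite_eq' Finset.univ v x]
      simp
    -- The red component is zero.
    have hrc : ∀ r : R, ∑ s : Tw, (if S.rW s = r then c s else 0) = 0 := by
      intro r
      have h1 : ∀ s : Tw, (if S.rW s = r then c s else 0)
          = ∑ u : V, x u * (if S.rW s = r then cf u s else 0) := by
        intro s
        by_cases hs : S.rW s = r
        · simp only [hs, if_true, hc, Finset.mul_sum]
        · simp [hs]
      rw [Finset.sum_congr rfl fun s _ => h1 s, Finset.sum_comm]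
      have h2 : ∀ u : V, ∑ s : Tw, x u * (if S.rW s = r then cf u s else 0) = 0 := by
        intro u
        rw [← Finset.mul_sum, hcr u r, mul_zero]
      rw [Finset.sum_congr rfl fun u _ => h2 u, Finset.sum_const_zero]
    -- Total number of chips in c.
    have hct : ∑ s : Tw, c s = 0 := by
      calc ∑ s : Tw, c s
          = ∑ s : Tw, ∑ v : V, (if S.vw s = v then c s else 0) := by
            refine Finset.sum_congr rfl fun s _ => ?_
            simp [Finset.sum_ite_eq]
        _ = ∑ v : V, ∑ s : Tw, (if S.vw s = v then c s else 0) := Finset.sum_comm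
        _ = ∑ v : V, x v := Finset.sum_congr rfl fun v _ => hvc v
        _ = 0 := hx
    set y : E → ℤ := fun e => ∑ s : Tw, (if S.ew s = e then c s else 0) with hy
    have hysum : ∑ e, y e = 0 := by
      calc ∑ e : E, y e
          = ∑ s : Tw, ∑ e : E, (if S.ew s = e then c s else 0) := Finset.sum_comm
        _ = ∑ s : Tw, c s := by
            refine Finset.sum_congr rfl fun s _ => ?_
            simp [Finset.sum_ite_eq]
        _ = 0 := hct
    refine ⟨y, hysum, c, ?_⟩
    rw [Prod.ext_iff, Prod.ext_iff]
    refine ⟨?_, ?_, ?_⟩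
    · funext v
      simp only [Trinity.chi, Prod.fst_sum, Prod.smul_fst, Finset.sum_apply,
        Pi.smul_apply, smul_eq_mul, mul_ite, mul_one, mul_zero]
      exact (hvc v).symm
    · funext e
      simp only [Trinity.chi, Prod.snd_sum, Prod.smul_snd, Prod.fst_sum,
        Prod.smul_fst, Finset.sum_apply, Pi.smul_apply, smul_eq_mul, mul_ite,
        mul_one, mul_zero]
      rfl
    · funext r
      simp only [Trinity.chi, Prod.snd_sum, Prod.smul_snd, Finset.sum_apply,
        Pi.smul_apply, smul_eq_mul, mul_ite, mul_one, mul_zero, Pi.zero_apply]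
      exact (hrc r).symm
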